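/- Let X be a non-negative absolutely continuous random variable with density f and distribution function F. Then for all t in the support of f with F(t) > 0, the weighted past entropy satisfies H̄^w(t) ≤ μ(t) log(t²/(2μ(t))), where μ(t) = E(X | X ≤ t) = (1/F(t)) ∫_0^t x f(x) dx is the mean past lifetime. -/

import Mathlib

open MeasureTheory

/-- Survival function `F̄(t) = ∫_t^∞ f(x) dx` of a density `f`. -/
noncomputable def survFn (f : ℝ → ℝ) (t : ℝ) : ℝ := ∫ x in Set.Ioi t, f x

/-- Distribution function `F(t) = ∫_{-∞}^t f(x) dx` of a density `f`. -/
noncomputable def distFn (f : ℝ → ℝ) (t : ℝ) : ℝ := ∫ x in Set.Iic t, f x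

/-- Residual entropy `H(t) = -∫_t^∞ (f(x)/F̄(t)) log (f(x)/F̄(t)) dx`. -/
noncomputable def resEnt (f : ℝ → ℝ) (t : ℝ) : ℝ :=
  -∫ x in Set.Ioi t, f x / survFn f t * Real.log (f x / survFn f t)

/-- Weighted residual entropy `H^w(t) = -∫_t^∞ x (f(x)/F̄(t)) log (f(x)/F̄(t)) dx`. -/
noncomputable def wResEnt (f : ℝ → ℝ) (t : ℝ) : ℝ :=
  -∫ x in Set.Ioi t, x * (f x / survFn f t) * Real.log (f x / survFn f t)

/-- Past entropy `H̄(t) = -∫_0^t (f(x)/F(t)) log (f(x)/F(t)) dx`. -/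
noncomputable def pastEnt (f : ℝ → ℝ) (t : ℝ) : ℝ :=
  -∫ x in Set.Ioc 0 t, f x / distFn f t * Real.log (f x / distFn f t)

/-- Weighted past entropy `H̄^w(t) = -∫_0^t x (f(x)/F(t)) log (f(x)/F(t)) dx`. -/
noncomputable def wPastEnt (f : ℝ → ℝ) (t : ℝ) : ℝ :=
  -∫ x in Set.Ioc 0 t, x * (f x / distFn f t) * Real.log (f x / distFn f t)

/-- The support `S = (0, ν)` (with `ν ≤ +∞`) as a subset of `ℝ`. -/
def supS (ν : EReal) : Set ℝ := {x : ℝ | 0 < x ∧ (x : EReal) < ν}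

open intervalIntegral

/-- Gibbs-type pointwise inequality: `a - b ≤ a log(a/b)` for `a ≥ 0`, `b > 0`. -/
lemma aux_gibbs (a b : ℝ) (ha : 0 ≤ a) (hb : 0 < b) : a - b ≤ a * Real.log (a / b) := by
  rcases ha.eq_or_lt with h | h
  · simp [← h]; linarith
  · have hlog : Real.log (b / a) ≤ b / a - 1 := Real.log_le_sub_one_of_pos (div_pos hb h)
    rw [Real.log_div hb.ne' h.ne'] at hlog
    rw [Real.log_div h.ne' hb.ne']
    have hba : a * (b / a) = b := by field_simp
    nlinarith [mul_le_mul_of_nonneg_left hlog h.le]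

/-- For a non-negative absolutely continuous random variable `X` with
density `f` supported on `(0, ν)` and distribution function `F`, for all `t` in the
support of `f` with `F(t) > 0`, the weighted past entropy satisfies
`H̄^w(t) ≤ μ(t) log(t² / (2 μ(t)))`, where
`μ(t) = E(X | X ≤ t) = (1/F(t)) ∫_0^t x f(x) dx` is the mean past lifetime. -/
theorem wPastEnt_upper_bound (f : ℝ → ℝ) (ν : EReal) (t : ℝ)
    (hf_nonneg : ∀ x, 0 ≤ f x)
    (hf_supp : Function.support f = supS ν)
    (hf_dens : ∫ x, f x = 1)
    (hwent : IntegrableOn (fun x => x * f x * Real.log (f x)) (Set.Ioc 0 t))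
    (ht : t ∈ supS ν) (hFt : 0 < distFn f t) :
    wPastEnt f t
      ≤ (∫ x in Set.Ioc 0 t, x * f x) / distFn f t
          * Real.log (t ^ 2 / (2 * ((∫ x in Set.Ioc 0 t, x * f x) / distFn f t))) := by
  obtain ⟨ht0, htν⟩ := ht
  set S := Set.Ioc (0:ℝ) t with hS
  set F := distFn f t with hF
  set M := ∫ x in S, x * f x with hM
  set I1 := ∫ x in S, x * f x * Real.log (f x) with hI1
  -- f vanishes on nonpositive reals
  have hf0 : ∀ x : ℝ, x ≤ 0 → f x = 0 := by
    intro x hx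
    by_contra h
    have hmem : x ∈ Function.support f := h
    rw [hf_supp] at hmem
    exact absurd hmem.1 (not_lt.mpr hx)
  -- f is integrable
  have hfi : Integrable f := by
    by_contra h
    rw [integral_undef h] at hf_dens; norm_num at hf_dens
  have hfiS : IntegrableOn f S := hfi.integrableOn
  -- x * f x is integrable on S
  have hxfS : IntegrableOn (fun x => x * f x) S := by
    refine Integrable.mono' (hfiS.const_mul t)
      ((aestronglyMeasurable_id.restrict).mul hfi.aestronglyMeasurable.restrict) ?_
    refine (ae_restrict_iff' measurableSet_Ioc).mpr (ae_of_all _ fun x hx => ?_)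
    rw [Real.norm_eq_abs, abs_mul, abs_of_pos hx.1, abs_of_nonneg (hf_nonneg x)]
    exact mul_le_mul_of_nonneg_right hx.2 (hf_nonneg x)
  -- F = ∫_S f
  have hFS : F = ∫ x in S, f x := by
    have hsplit : Set.Iic t = Set.Iic 0 ∪ S := (Set.Iic_union_Ioc_eq_Iic ht0.le).symm
    have hz : ∫ x in Set.Iic (0:ℝ), f x = 0 :=
      setIntegral_eq_zero_of_forall_eq_zero (fun x hx => hf0 x hx)
    rw [hF, distFn, hsplit,
      setIntegral_union (Set.Iic_disjoint_Ioc le_rfl) measurableSet_Ioc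
        hfi.integrableOn hfi.integrableOn, hz, zero_add]
  have hFpos' : 0 < ∫ x in S, f x := hFS ▸ hFt
  -- M > 0
  have hsupp_pos : 0 < volume (Function.support f ∩ S) :=
    (setIntegral_pos_iff_support_of_nonneg_ae (ae_of_all _ hf_nonneg) hfiS).mp hFpos'
  have hMpos : 0 < M := by
    rw [hM]
    refine (setIntegral_pos_iff_support_of_nonneg_ae ?_ hxfS).mpr ?_
    · exact (ae_restrict_iff' measurableSet_Ioc).mpr
        (ae_of_all _ fun x hx => mul_nonneg hx.1.le (hf_nonneg x))
    · refine lt_of_lt_of_le hsupp_pos (measure_mono fun x hx => ?_)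
      obtain ⟨hxs, hxS⟩ := hx
      refine ⟨?_, hxS⟩
      simp only [Function.mem_support] at hxs ⊢
      exact mul_ne_zero (ne_of_gt hxS.1) hxs
  set c := t ^ 2 / (2 * M) with hc
  have hcpos : 0 < c := by rw [hc]; positivity
  -- the log-mul expansion of the comparison integrand
  have heq : (fun x => x * f x * Real.log (f x * c))
      = fun x => x * f x * Real.log (f x) + Real.log c * (x * f x) := by
    funext x
    rcases eq_or_ne (f x) 0 with h | h
    · simp [h]
    · rw [Real.log_mul h hcpos.ne']; ring
  have h2 : IntegrableOn (fun x => x * f x * Real.log (f x * c)) S := by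
    rw [heq]; exact hwent.add (hxfS.const_mul _)
  -- key inequality : 0 ≤ I1 + log c * M
  have hx_int : ∫ x in S, (x : ℝ) = t ^ 2 / 2 := by
    rw [hS, ← intervalIntegral.integral_of_le ht0.le, integral_id]; ring
  have hxiS : IntegrableOn (fun x : ℝ => x) S := by
    rw [hS]; exact (intervalIntegrable_iff_integrableOn_Ioc_of_le ht0.le).mp
      intervalIntegrable_id
  have h1 : ∫ x in S, (x * f x - (2 * M / t ^ 2) * x) = 0 := by
    rw [integral_sub hxfS (hxiS.const_mul _), MeasureTheory.integral_const_mul, hx_int, ← hM]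
    field_simp; ring
  have h3 : ∫ x in S, (x * f x - (2 * M / t ^ 2) * x)
      ≤ ∫ x in S, x * f x * Real.log (f x * c) := by
    refine setIntegral_mono_on (hxfS.sub (hxiS.const_mul _)) h2 measurableSet_Ioc
      fun x hx => ?_
    have hb : 0 < (2 * M / t ^ 2) * x :=
      mul_pos (div_pos (by linarith) (pow_pos ht0 2)) hx.1
    have hkey := aux_gibbs (x * f x) ((2 * M / t ^ 2) * x)
      (mul_nonneg hx.1.le (hf_nonneg x)) hb
    have hq : (x * f x) / ((2 * M / t ^ 2) * x) = f x * c := by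
      have hx0 : x ≠ 0 := ne_of_gt hx.1
      rw [hc]; field_simp
    rwa [hq] at hkey
  have key : (0:ℝ) ≤ I1 + Real.log c * M := by
    have h4 : ∫ x in S, x * f x * Real.log (f x * c) = I1 + Real.log c * M := by
      rw [heq, integral_add hwent (hxfS.const_mul _), MeasureTheory.integral_const_mul, ← hM, ← hI1]
    rw [h1, h4] at h3
    exact h3
  -- compute wPastEnt in terms of I1 and M
  have hWeq : (fun x => x * (f x / F) * Real.log (f x / F))
      = fun x => (x * f x * Real.log (f x)) * F⁻¹ - (Real.log F * F⁻¹) * (x * f x) := by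
    funext x
    rcases eq_or_ne (f x) 0 with h | h
    · simp [h]
    · rw [Real.log_div h hFt.ne', div_eq_mul_inv]; ring
  have hW : wPastEnt f t = -(I1 * F⁻¹ - (Real.log F * F⁻¹) * M) := by
    rw [wPastEnt, ← hF, ← hS, hWeq,
      integral_sub (hwent.mul_const _) ((hxfS.const_mul _)),
      MeasureTheory.integral_mul_const, MeasureTheory.integral_const_mul, ← hM, ← hI1]
  -- final computation
  rw [hW]
  have hrw : t ^ 2 / (2 * (M / F)) = c * F := by
    have hF0 : F ≠ 0 := hFt.ne'
    have hM0 : M ≠ 0 := hMpos.ne'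
    rw [hc]; field_simp
  rw [hrw, Real.log_mul hcpos.ne' hFt.ne', div_eq_mul_inv M F]
  have hfinal := mul_nonneg key (inv_nonneg.mpr hFt.le)
  nlinarith [hfinal]
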